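/- Let c, d ∈ ℝ with c ≠ 0 or d ≠ 0, let ε ∈ (0,1), and define ‖(c,d)‖ = ((1−ε)c² + εd²)^{1/2}. Consider the coupled recursion c_{k+1} = (3/2)c_k/N_k − (1/2)c_k³/M_k, d_{k+1} = (3/2)d_k/N_k − (1/2)d_k³/M_k, where N_k = ((1−ε)c_k² + εd_k²)^{1/2} and M_k = ((1−ε)c_k⁶ + εd_k⁶)^{1/2}, with c₀ = 1, d₀ = x > 0. Then the sequence (c_k, d_k) is bounded for every x > 0. -/

import Mathlib

/-- The Zak-domain reduction of the norm-scaled tight iteration II for a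
two-valued Zak transform: `Γ_k = c_k` on a set of measure `1−ε` and `= d_k`
on a set of measure `ε`. -/
noncomputable def seq11 (ε x : ℝ) : ℕ → ℝ × ℝ
  | 0 => (1, x)
  | k + 1 =>
    let c := (seq11 ε x k).1
    let d := (seq11 ε x k).2
    let N := Real.sqrt ((1 - ε) * c ^ 2 + ε * d ^ 2)
    let M := Real.sqrt ((1 - ε) * c ^ 6 + ε * d ^ 6)
    ((3/2) * c / N - (1/2) * c ^ 3 / M, (3/2) * d / N - (1/2) * d ^ 3 / M)

private lemma aux11 (s c A : ℝ) (hs : 0 < s) (hA : s * c ^ 2 ≤ A) :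
    |c / Real.sqrt A| ≤ 1 / Real.sqrt s := by
  rcases eq_or_ne c 0 with rfl | hc
  · simp
  · have hc2 : 0 < c ^ 2 := by positivity
    have hApos : 0 < A := lt_of_lt_of_le (by positivity) hA
    have h1 : Real.sqrt s * |c| ≤ Real.sqrt A := by
      have := Real.sqrt_le_sqrt hA
      rwa [Real.sqrt_mul hs.le, Real.sqrt_sq_eq_abs] at this
    rw [abs_div, abs_of_nonneg (Real.sqrt_nonneg A), div_le_div_iff₀
      (Real.sqrt_pos.2 hApos) (Real.sqrt_pos.2 hs), one_mul]
    calc |c| * Real.sqrt s = Real.sqrt s * |c| := mul_comm _ _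
      _ ≤ Real.sqrt A := h1

private lemma step11 (s t c d : ℝ) (hs : 0 < s) (ht : 0 ≤ t) :
    |(3/2) * c / Real.sqrt (s * c ^ 2 + t * d ^ 2)
      - (1/2) * c ^ 3 / Real.sqrt (s * c ^ 6 + t * d ^ 6)| ≤ 2 / Real.sqrt s := by
  have h1 : |c / Real.sqrt (s * c ^ 2 + t * d ^ 2)| ≤ 1 / Real.sqrt s :=
    aux11 s c _ hs (by nlinarith [sq_nonneg d])
  have h2 : |c ^ 3 / Real.sqrt (s * c ^ 6 + t * d ^ 6)| ≤ 1 / Real.sqrt s := by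
    have h6 : 0 ≤ t * d ^ 6 := by positivity
    have hle : s * (c ^ 3) ^ 2 ≤ s * c ^ 6 + t * d ^ 6 := by nlinarith
    have := aux11 s (c ^ 3) (s * c ^ 6 + t * d ^ 6) hs hle
    convert this using 3 <;> ring
  have e1 : (3/2) * c / Real.sqrt (s * c ^ 2 + t * d ^ 2)
      = (3/2) * (c / Real.sqrt (s * c ^ 2 + t * d ^ 2)) := by ring
  have e2 : (1/2) * c ^ 3 / Real.sqrt (s * c ^ 6 + t * d ^ 6)
      = (1/2) * (c ^ 3 / Real.sqrt (s * c ^ 6 + t * d ^ 6)) := by ring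
  rw [e1, e2]
  calc |(3/2) * (c / Real.sqrt (s * c ^ 2 + t * d ^ 2))
        - (1/2) * (c ^ 3 / Real.sqrt (s * c ^ 6 + t * d ^ 6))|
      ≤ |(3/2) * (c / Real.sqrt (s * c ^ 2 + t * d ^ 2))|
        + |(1/2) * (c ^ 3 / Real.sqrt (s * c ^ 6 + t * d ^ 6))| := abs_sub _ _
    _ ≤ (3/2) * (1 / Real.sqrt s) + (1/2) * (1 / Real.sqrt s) := by
        rw [abs_mul, abs_mul]
        gcongr <;> first | exact h1 | exact h2 | (rw [abs_of_pos] <;> norm_num)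
    _ = 2 / Real.sqrt s := by ring

/-- Due to the norming operations, the recursion stays bounded for every `x > 0`. -/
theorem stmt11 (ε x : ℝ) (hε : ε ∈ Set.Ioo (0 : ℝ) 1) (hx : 0 < x) :
    ∃ C : ℝ, ∀ k : ℕ, |(seq11 ε x k).1| ≤ C ∧ |(seq11 ε x k).2| ≤ C := by
  obtain ⟨hε0, hε1⟩ := hε
  have hs : 0 < 1 - ε := by linarith
  refine ⟨max (max 1 x) (max (2 / Real.sqrt (1 - ε)) (2 / Real.sqrt ε)), fun k => ?_⟩
  cases k with
  | zero =>
      constructor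
      · simp [seq11]
      · simp [seq11, abs_of_pos hx]
  | succ n =>
      constructor
      · refine le_trans ?_ (le_max_of_le_right (le_max_left _ _))
        show |(3/2) * (seq11 ε x n).1 / _ - (1/2) * (seq11 ε x n).1 ^ 3 / _| ≤ _
        exact step11 (1 - ε) ε _ _ hs hε0.le
      · refine le_trans ?_ (le_max_of_le_right (le_max_right _ _))
        show |(3/2) * (seq11 ε x n).2 / _ - (1/2) * (seq11 ε x n).2 ^ 3 / _| ≤ _
        have := step11 ε (1 - ε) (seq11 ε x n).2 (seq11 ε x n).1 hε0 hs.le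
        convert this using 4
        · rfl
        · rw [add_comm]
        · rw [add_comm]
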